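/- Let n ≥ 3 and let X be a vertex of the augmented cube AQ_n. For 1 ≤ i ≤ n, the set of common neighbors of X and X_i in AQ_n equals {X_2, X̄_2} if i = 1, and equals {X̄_i, X̄_{i−1}} if i > 1. -/

import Mathlib

/-- Flip the single bit at index `i` (paper bit `i+1`), i.e. the map `X ↦ X_{i+1}`. -/
def flipBit {n : ℕ} (i : Fin n) (X : Fin n → Bool) : Fin n → Bool :=
  fun j => if j = i then !(X j) else X j

/-- Flip all bits at indices `≤ i` (paper bits `i+1, i, …, 1`), i.e. the map `X ↦ X̄_{i+1}`. -/
def flipDown {n : ℕ} (i : Fin n) (X : Fin n → Bool) : Fin n → Bool :=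
  fun j => if j ≤ i then !(X j) else X j

lemma flipBit_flipBit {n : ℕ} (i : Fin n) (X : Fin n → Bool) :
    flipBit i (flipBit i X) = X := by
  funext j; by_cases h : j = i <;> simp [flipBit, h]

lemma flipDown_flipDown {n : ℕ} (i : Fin n) (X : Fin n → Bool) :
    flipDown i (flipDown i X) = X := by
  funext j; by_cases h : j ≤ i <;> simp [flipDown, h]

/-- The augmented cube `AQ_n`: vertices are `n`-bit strings; two distinct vertices `X, Y`
are adjacent iff `Y = X_i` for some `1 ≤ i ≤ n` (a hypercube edge) or `Y = X̄_i` for some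
`2 ≤ i ≤ n` (a complement edge).  Paper bit `i` corresponds to index `i - 1 : Fin n`. -/
def augCube (n : ℕ) : SimpleGraph (Fin n → Bool) where
  Adj X Y := X ≠ Y ∧
    ((∃ i : Fin n, Y = flipBit i X) ∨ (∃ i : Fin n, 1 ≤ i.val ∧ Y = flipDown i X))
  symm := by
    constructor
    rintro X Y ⟨hne, h⟩
    refine ⟨hne.symm, ?_⟩
    rcases h with ⟨i, rfl⟩ | ⟨i, hi, rfl⟩
    · exact Or.inl ⟨i, (flipBit_flipBit i X).symm⟩
    · exact Or.inr ⟨i, hi, (flipDown_flipDown i X).symm⟩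
  loopless := ⟨fun X h => h.1 rfl⟩

lemma flip_ne (p q : Prop) [Decidable p] [Decidable q] (x : Bool) :
    ((if p then !x else x) ≠ (if q then !x else x)) ↔ (p ↔ ¬q) := by
  by_cases hp : p <;> by_cases hq : q <;> cases x <;> simp [hp, hq]

lemma flip_ne_base (p : Prop) [Decidable p] (x : Bool) :
    ((if p then !x else x) ≠ x) ↔ p := by
  by_cases hp : p <;> cases x <;> simp [hp]

lemma flip_ne₂ (p q r : Prop) [Decidable p] [Decidable q] [Decidable r] (x : Bool) :
    ((if p then !x else x) ≠ (if q then !(if r then !x else x) else (if r then !x else x)))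
      ↔ (p ↔ ¬(q ↔ ¬r)) := by
  by_cases hp : p <;> by_cases hq : q <;> by_cases hr : r <;> cases x <;> simp [hp, hq, hr]

lemma bool_xor (z x y : Bool) : ((z ≠ x) ↔ ((z ≠ y) ↔ ¬(y ≠ x))) := by
  revert z x y; decide

lemma eq_flipBit_iff {n : ℕ} (a : Fin n) (X Z : Fin n → Bool) :
    Z = flipBit a X ↔ ∀ j, (Z j ≠ X j ↔ j = a) := by
  constructor
  · rintro rfl j
    by_cases h : j = a <;> simp [flipBit, h]
  · intro h; funext j
    by_cases hj : j = a
    · have h2 := (h j).mpr hj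
      simp only [flipBit, if_pos hj]
      revert h2; cases Z j <;> cases X j <;> simp
    · have h2 : Z j = X j := by
        by_contra hne; exact hj ((h j).mp hne)
      simp only [flipBit, if_neg hj, h2]

lemma eq_flipDown_iff {n : ℕ} (a : Fin n) (X Z : Fin n → Bool) :
    Z = flipDown a X ↔ ∀ j, (Z j ≠ X j ↔ j ≤ a) := by
  constructor
  · rintro rfl j
    by_cases h : j ≤ a <;> simp [flipDown, h]
  · intro h; funext j
    by_cases hj : j ≤ a
    · have h2 := (h j).mpr hj
      simp only [flipDown, if_pos hj]
      revert h2; cases Z j <;> cases X j <;> simp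
    · have h2 : Z j = X j := by
        by_contra hne; exact hj ((h j).mp hne)
      simp only [flipDown, if_neg hj, h2]

lemma flipBit_ne {n : ℕ} (a : Fin n) (X : Fin n → Bool) : flipBit a X ≠ X := by
  intro h
  have := congrFun h a
  simp [flipBit] at this

lemma flipDown_ne {n : ℕ} (a : Fin n) (X : Fin n → Bool) : flipDown a X ≠ X := by
  intro h
  have := congrFun h ⟨0, a.pos⟩
  simp [flipDown, Fin.le_def] at this

lemma aug_main {n : ℕ} (hn : 3 ≤ n) (X Z : Fin n → Bool) (k : Fin n)
    (h1 : (augCube n).Adj X Z) (h2 : (augCube n).Adj (flipBit k X) Z) :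
    (k.val = 0 → Z = flipBit ⟨1, by omega⟩ X ∨ Z = flipDown ⟨1, by omega⟩ X) ∧
    (1 ≤ k.val → Z = flipDown k X ∨ Z = flipDown ⟨k.val - 1, by omega⟩ X) := by
  obtain ⟨-, hc1⟩ := h1
  obtain ⟨-, hc2⟩ := h2
  have hYX : ∀ j, ((flipBit k X) j ≠ X j ↔ j = k) := (eq_flipBit_iff k X _).mp rfl
  rcases hc1 with ⟨a, hZa⟩ | ⟨a, ha1, hZa⟩ <;> rcases hc2 with ⟨b, hZb⟩ | ⟨b, hb1, hZb⟩
  · -- bit / bit : impossible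
    exfalso
    have hP := (eq_flipBit_iff a X Z).mp hZa
    have hQ := (eq_flipBit_iff b (flipBit k X) Z).mp hZb
    have hN : ∀ m, m < n → (m = a.val ↔ ((m = b.val) ↔ ¬ m = k.val)) := by
      intro m hm
      have h3 : ((⟨m, hm⟩ : Fin n) = a ↔ (((⟨m, hm⟩ : Fin n) = b) ↔ ¬ (⟨m, hm⟩ : Fin n) = k)) := by
        rw [← hP ⟨m, hm⟩, ← hQ ⟨m, hm⟩, ← hYX ⟨m, hm⟩]
        exact bool_xor _ _ _
      simpa [Fin.ext_iff] using h3
    have Ha := hN a.val a.isLt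
    have Hb := hN b.val b.isLt
    have Hk := hN k.val k.isLt
    omega
  · -- bit a / down b
    have hP := (eq_flipBit_iff a X Z).mp hZa
    have hQ := (eq_flipDown_iff b (flipBit k X) Z).mp hZb
    have hN : ∀ m, m < n → (m = a.val ↔ ((m ≤ b.val) ↔ ¬ m = k.val)) := by
      intro m hm
      have h3 : ((⟨m, hm⟩ : Fin n) = a ↔ (((⟨m, hm⟩ : Fin n) ≤ b) ↔ ¬ (⟨m, hm⟩ : Fin n) = k)) := by
        rw [← hP ⟨m, hm⟩, ← hQ ⟨m, hm⟩, ← hYX ⟨m, hm⟩]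
        exact bool_xor _ _ _
      simpa [Fin.ext_iff, Fin.le_def] using h3
    have H0 := hN 0 (by omega)
    have H1 := hN 1 (by omega)
    have H2 := hN 2 (by omega)
    have Ha := hN a.val a.isLt
    have Hb := hN b.val b.isLt
    have Hk := hN k.val k.isLt
    have harith : b.val = 1 ∧ k.val ≤ 1 ∧ a.val + k.val = 1 := by omega
    constructor
    · intro hk0
      left
      have hav : a = ⟨1, by omega⟩ := Fin.ext (by simp; omega)
      rw [← hav]; exact hZa
    · intro hk1
      right
      rw [eq_flipDown_iff]
      intro j
      rw [hP j]
      simp only [Fin.ext_iff, Fin.le_def]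
      omega
  · -- down a / bit b
    have hP := (eq_flipDown_iff a X Z).mp hZa
    have hQ := (eq_flipBit_iff b (flipBit k X) Z).mp hZb
    have hN : ∀ m, m < n → (m ≤ a.val ↔ ((m = b.val) ↔ ¬ m = k.val)) := by
      intro m hm
      have h3 : ((⟨m, hm⟩ : Fin n) ≤ a ↔ (((⟨m, hm⟩ : Fin n) = b) ↔ ¬ (⟨m, hm⟩ : Fin n) = k)) := by
        rw [← hP ⟨m, hm⟩, ← hQ ⟨m, hm⟩, ← hYX ⟨m, hm⟩]
        exact bool_xor _ _ _
      simpa [Fin.ext_iff, Fin.le_def] using h3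
    have H0 := hN 0 (by omega)
    have H1 := hN 1 (by omega)
    have H2 := hN 2 (by omega)
    have Ha := hN a.val a.isLt
    have Hb := hN b.val b.isLt
    have Hk := hN k.val k.isLt
    have harith : a.val = 1 ∧ ((k.val = 0 ∧ b.val = 1) ∨ (k.val = 1 ∧ b.val = 0)) := by omega
    constructor
    · intro hk0
      right
      have hav : a = ⟨1, by omega⟩ := Fin.ext (by simp; omega)
      rw [← hav]; exact hZa
    · intro hk1
      left
      have hav : a = k := Fin.ext (by omega)
      rw [← hav]; exact hZa
  · -- down a / down b
    have hP := (eq_flipDown_iff a X Z).mp hZa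
    have hQ := (eq_flipDown_iff b (flipBit k X) Z).mp hZb
    have hN : ∀ m, m < n → (m ≤ a.val ↔ ((m ≤ b.val) ↔ ¬ m = k.val)) := by
      intro m hm
      have h3 : ((⟨m, hm⟩ : Fin n) ≤ a ↔ (((⟨m, hm⟩ : Fin n) ≤ b) ↔ ¬ (⟨m, hm⟩ : Fin n) = k)) := by
        rw [← hP ⟨m, hm⟩, ← hQ ⟨m, hm⟩, ← hYX ⟨m, hm⟩]
        exact bool_xor _ _ _
      simpa [Fin.ext_iff, Fin.le_def] using h3
    have Ha := hN a.val a.isLt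
    have Hb := hN b.val b.isLt
    have Hk := hN k.val k.isLt
    have Hk1 := hN (k.val - 1) (by omega)
    have Hb1 : b.val + 1 < n → (b.val + 1 ≤ a.val ↔ ((b.val + 1 ≤ b.val) ↔ ¬ b.val + 1 = k.val)) :=
      fun h => hN (b.val + 1) h
    have harith : (k.val = b.val ∧ a.val + 1 = k.val) ∨ (k.val = b.val + 1 ∧ a.val = k.val) := by
      omega
    constructor
    · intro hk0; exfalso; omega
    · intro hk1
      rcases harith with ⟨hkb, hak⟩ | ⟨hkb, hak⟩
      · right
        rw [eq_flipDown_iff]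
        intro j
        rw [hP j]
        simp only [Fin.le_def]
        omega
      · left
        have hav : a = k := Fin.ext (by omega)
        rw [← hav]; exact hZa

lemma adj_of_eq_flipBit {n : ℕ} {W Z : Fin n → Bool} (a : Fin n) (h : Z = flipBit a W) :
    (augCube n).Adj W Z := by
  refine ⟨?_, Or.inl ⟨a, h⟩⟩
  rw [h]; exact (flipBit_ne a W).symm

lemma adj_of_eq_flipDown {n : ℕ} {W Z : Fin n → Bool} (a : Fin n) (ha : 1 ≤ a.val)
    (h : Z = flipDown a W) : (augCube n).Adj W Z := by
  refine ⟨?_, Or.inr ⟨a, ha, h⟩⟩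
  rw [h]; exact (flipDown_ne a W).symm

/-- Let `n ≥ 3`, `X` a vertex of `AQ_n` and `1 ≤ i ≤ n` (paper bit `i` is index `i - 1`).
The common neighbors of `X` and `X_i` are `{X_2, X̄_2}` if `i = 1`, and
`{X̄_i, X̄_(i-1)}` if `i > 1`. -/
theorem augCube_common_neighbors_hypercube_edge (n : ℕ) (hn : 3 ≤ n) (X : Fin n → Bool)
    (i : ℕ) (h1 : 1 ≤ i) (h2 : i ≤ n) :
    (i = 1 →
      {Z | (augCube n).Adj X Z ∧ (augCube n).Adj (flipBit ⟨i - 1, by omega⟩ X) Z} =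
        {flipBit ⟨1, by omega⟩ X, flipDown ⟨1, by omega⟩ X}) ∧
    (1 < i →
      {Z | (augCube n).Adj X Z ∧ (augCube n).Adj (flipBit ⟨i - 1, by omega⟩ X) Z} =
        {flipDown ⟨i - 1, by omega⟩ X, flipDown ⟨i - 2, by omega⟩ X}) := by
  constructor
  · rintro rfl
    ext Z
    simp only [Set.mem_setOf_eq, Set.mem_insert_iff, Set.mem_singleton_iff]
    constructor
    · rintro ⟨hA, hB⟩
      exact (aug_main hn X Z ⟨0, by omega⟩ hA hB).1 rfl
    · rintro (rfl | rfl)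
      · refine ⟨adj_of_eq_flipBit ⟨1, by omega⟩ rfl, adj_of_eq_flipDown ⟨1, by omega⟩ (le_refl 1) ?_⟩
        rw [eq_flipDown_iff]
        intro j
        simp only [flipBit]
        rw [flip_ne]
        simp only [Fin.ext_iff, Fin.le_def]
        omega
      · refine ⟨adj_of_eq_flipDown ⟨1, by omega⟩ (le_refl 1) rfl, adj_of_eq_flipBit ⟨1, by omega⟩ ?_⟩
        rw [eq_flipBit_iff]
        intro j
        simp only [flipBit, flipDown]
        rw [flip_ne]
        simp only [Fin.ext_iff, Fin.le_def]
        omega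
  · intro hi
    ext Z
    simp only [Set.mem_setOf_eq, Set.mem_insert_iff, Set.mem_singleton_iff]
    constructor
    · rintro ⟨hA, hB⟩
      have h := (aug_main hn X Z ⟨i - 1, by omega⟩ hA hB).2 (show 1 ≤ i - 1 by omega)
      rcases h with h | h
      · exact Or.inl h
      · exact Or.inr h
    · rintro (rfl | rfl)
      · refine ⟨adj_of_eq_flipDown ⟨i - 1, by omega⟩ (show 1 ≤ i - 1 by omega) rfl, ?_⟩
        by_cases hi2 : i = 2
        · refine adj_of_eq_flipBit ⟨0, by omega⟩ ?_
          rw [eq_flipBit_iff]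
          intro j
          simp only [flipBit, flipDown]
          rw [flip_ne]
          simp only [Fin.ext_iff, Fin.le_def]
          omega
        · refine adj_of_eq_flipDown ⟨i - 2, by omega⟩ (show 1 ≤ i - 2 by omega) ?_
          rw [eq_flipDown_iff]
          intro j
          simp only [flipBit, flipDown]
          rw [flip_ne]
          simp only [Fin.ext_iff, Fin.le_def]
          omega
      · refine ⟨?_, adj_of_eq_flipDown ⟨i - 1, by omega⟩ (show 1 ≤ i - 1 by omega) ?_⟩
        · by_cases hi2 : i = 2
          · refine adj_of_eq_flipBit ⟨0, by omega⟩ ?_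
            rw [eq_flipBit_iff]
            intro j
            simp only [flipDown]
            rw [flip_ne_base]
            simp only [Fin.ext_iff, Fin.le_def]
            omega
          · exact adj_of_eq_flipDown ⟨i - 2, by omega⟩ (show 1 ≤ i - 2 by omega) rfl
        · rw [eq_flipDown_iff]
          intro j
          simp only [flipBit, flipDown]
          rw [flip_ne]
          simp only [Fin.ext_iff, Fin.le_def]
          omega
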